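/- If I(t) ≤ M for all t ≥ 0 and b·M < ξ, then Z(t) = Z(0)·exp(∫₀ᵗ(b·I(s)−ξ)ds) tends to 0 as t → ∞ (skeptics die out when mediums stay below the critical threshold ξ/b). -/
import Mathlib


theorem skeptics_die_out (b ξ Z0 M : ℝ) (I : ℝ → ℝ) (hI : Continuous I)
    (hb : 0 < b) (hξ : 0 < ξ) (hZ0 : 0 < Z0)
    (hM : ∀ t, 0 ≤ t → I t ≤ M) (hcrit : b * M < ξ) :
    Filter.Tendsto (fun t => Z0 * Real.exp (∫ s in (0:ℝ)..t, b * I s - ξ))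
      Filter.atTop (nhds 0) := by
  have hbound : ∀ t : ℝ, 0 ≤ t →
      (∫ s in (0:ℝ)..t, b * I s - ξ) ≤ (b * M - ξ) * t := by
    intro t ht
    have h1 : (∫ s in (0:ℝ)..t, b * I s - ξ) ≤ ∫ s in (0:ℝ)..t, b * M - ξ := by
      apply intervalIntegral.integral_mono_on ht
      · exact ((continuous_const.mul hI).sub continuous_const).intervalIntegrable 0 t
      · exact intervalIntegrable_const
      · intro s hs
        have := hM s hs.1
        nlinarith
    have h2 : (∫ s in (0:ℝ)..t, b * M - ξ) = (b * M - ξ) * t := by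
      simp [intervalIntegral.integral_const, mul_comm]; ring
    linarith
  have hlim : Filter.Tendsto (fun t => Z0 * Real.exp ((b * M - ξ) * t))
      Filter.atTop (nhds 0) := by
    have : Filter.Tendsto (fun t : ℝ => (b * M - ξ) * t) Filter.atTop Filter.atBot :=
      Filter.Tendsto.const_mul_atTop_of_neg (by linarith) Filter.tendsto_id
    simpa using (Real.tendsto_exp_atBot.comp this).const_mul Z0
  apply squeeze_zero' (g := fun t => Z0 * Real.exp ((b * M - ξ) * t))
  · filter_upwards with t
    positivity
  · filter_upwards [Filter.eventually_ge_atTop (0:ℝ)] with t ht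
    exact mul_le_mul_of_nonneg_left (Real.exp_le_exp.2 (hbound t ht)) hZ0.le
  · exact hlim
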